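/- Let f, g : [0, M] → ℝ be C² with f' and g' injective, g'' nonvanishing, and f''/g'' injective on [0, M]. Let S, T be such that X = {(a,b,c) ∈ [0,M]³ : a+b+c = S, g(a)+g(b)+g(c) = T} is nonempty. If (a, b, c) ∈ X minimizes f(a) + f(b) + f(c) over X and a, b, c ∈ (0, M), then at least two of a, b, c are equal. -/

import Mathlib

open Real Set

theorem general_constrained_min (M S T : ℝ) (hM : 0 < M) (f g : ℝ → ℝ)
    (hf : ContDiffOn ℝ 2 f (Icc 0 M)) (hg : ContDiffOn ℝ 2 g (Icc 0 M))
    (hf' : InjOn (deriv f) (Icc 0 M)) (hg' : InjOn (deriv g) (Icc 0 M))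
    (hg'' : ∀ x ∈ Icc 0 M, iteratedDeriv 2 g x ≠ 0)
    (hfg : InjOn (fun x => iteratedDeriv 2 f x / iteratedDeriv 2 g x) (Icc 0 M))
    (a b c : ℝ) (ha : a ∈ Ioo 0 M) (hb : b ∈ Ioo 0 M) (hc : c ∈ Ioo 0 M)
    (hsum : a + b + c = S) (hcon : g a + g b + g c = T)
    (hmin : ∀ a' b' c' : ℝ, a' ∈ Icc 0 M → b' ∈ Icc 0 M → c' ∈ Icc 0 M →
      a' + b' + c' = S → g a' + g b' + g c' = T →
      f a + f b + f c ≤ f a' + f b' + f c') :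
    a = b ∨ b = c ∨ a = c := by
  by_contra hne
  push_neg at hne
  obtain ⟨hab, hbc, hac⟩ := hne
  have haI : a ∈ Icc 0 M := Ioo_subset_Icc_self ha
  have hbI : b ∈ Icc 0 M := Ioo_subset_Icc_self hb
  have hcI : c ∈ Icc 0 M := Ioo_subset_Icc_self hc
  have hopen : IsOpen (Ioo (0:ℝ) M) := isOpen_Ioo
  have hfO : ContDiffOn ℝ 2 f (Ioo 0 M) := hf.mono Ioo_subset_Icc_self
  have hgO : ContDiffOn ℝ 2 g (Ioo 0 M) := hg.mono Ioo_subset_Icc_self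
  have hsf : ∀ x ∈ Ioo 0 M, HasStrictDerivAt f (deriv f x) x := fun x hx =>
    (hfO.contDiffAt (hopen.mem_nhds hx)).hasStrictDerivAt two_ne_zero
  have hsg : ∀ x ∈ Ioo 0 M, HasStrictDerivAt g (deriv g x) x := fun x hx =>
    (hgO.contDiffAt (hopen.mem_nhds hx)).hasStrictDerivAt two_ne_zero
  -- projections
  set P1 : ℝ × ℝ × ℝ →L[ℝ] ℝ := ContinuousLinearMap.fst ℝ ℝ (ℝ × ℝ) with hP1def
  set P2 : ℝ × ℝ × ℝ →L[ℝ] ℝ :=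
    (ContinuousLinearMap.fst ℝ ℝ ℝ).comp (ContinuousLinearMap.snd ℝ ℝ (ℝ × ℝ)) with hP2def
  set P3 : ℝ × ℝ × ℝ →L[ℝ] ℝ :=
    (ContinuousLinearMap.snd ℝ ℝ ℝ).comp (ContinuousLinearMap.snd ℝ ℝ (ℝ × ℝ)) with hP3def
  set x₀ : ℝ × ℝ × ℝ := (a, b, c) with hx₀def
  have hP1 : HasStrictFDerivAt (fun p : ℝ × ℝ × ℝ => p.1) P1 x₀ := hasStrictFDerivAt_fst
  have hP2 : HasStrictFDerivAt (fun p : ℝ × ℝ × ℝ => p.2.1) P2 x₀ :=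
    hasStrictFDerivAt_fst.comp x₀ hasStrictFDerivAt_snd
  have hP3 : HasStrictFDerivAt (fun p : ℝ × ℝ × ℝ => p.2.2) P3 x₀ :=
    hasStrictFDerivAt_snd.comp x₀ hasStrictFDerivAt_snd
  set Φ : Bool → ℝ × ℝ × ℝ → ℝ := fun i p =>
    cond i (p.1 + p.2.1 + p.2.2) (g p.1 + g p.2.1 + g p.2.2) with hΦdef
  set Φ' : Bool → ℝ × ℝ × ℝ →L[ℝ] ℝ := fun i =>
    cond i (P1 + P2 + P3) (deriv g a • P1 + deriv g b • P2 + deriv g c • P3) with hΦ'def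
  have hΦ' : ∀ i, HasStrictFDerivAt (Φ i) (Φ' i) x₀ := by
    intro i
    cases i
    · exact (((hsg a ha).comp_hasStrictFDerivAt x₀ hP1).add
        ((hsg b hb).comp_hasStrictFDerivAt x₀ hP2)).add
        ((hsg c hc).comp_hasStrictFDerivAt x₀ hP3)
    · exact (hP1.add hP2).add hP3
  set φ : ℝ × ℝ × ℝ → ℝ := fun p => f p.1 + f p.2.1 + f p.2.2 with hφdef
  set φ' : ℝ × ℝ × ℝ →L[ℝ] ℝ :=
    deriv f a • P1 + deriv f b • P2 + deriv f c • P3 with hφ'def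
  have hφ' : HasStrictFDerivAt φ φ' x₀ :=
    (((hsf a ha).comp_hasStrictFDerivAt x₀ hP1).add
      ((hsf b hb).comp_hasStrictFDerivAt x₀ hP2)).add
      ((hsf c hc).comp_hasStrictFDerivAt x₀ hP3)
  have hextr : IsLocalExtrOn φ {p | ∀ i, Φ i p = Φ i x₀} x₀ := by
    apply IsMinFilter.isExtr
    have hU : (Ioo 0 M ×ˢ Ioo 0 M ×ˢ Ioo 0 M) ∈ nhds x₀ :=
      (hopen.prod (hopen.prod hopen)).mem_nhds ⟨ha, hb, hc⟩
    filter_upwards [nhdsWithin_le_nhds hU, eventually_mem_nhdsWithin] with p hpU hps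
    have h1 : p.1 + p.2.1 + p.2.2 = a + b + c := hps true
    have h2 : g p.1 + g p.2.1 + g p.2.2 = g a + g b + g c := hps false
    exact hmin p.1 p.2.1 p.2.2 (Ioo_subset_Icc_self hpU.1) (Ioo_subset_Icc_self hpU.2.1)
      (Ioo_subset_Icc_self hpU.2.2) (by rw [h1]; exact hsum) (by rw [h2]; exact hcon)
  obtain ⟨Λ, Λ₀, hΛne, hΛ⟩ := hextr.exists_multipliers_of_hasStrictFDerivAt hΦ' hφ'
  have heval : ∀ v : ℝ × ℝ × ℝ,
      Λ true * (P1 v + P2 v + P3 v) +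
        Λ false * (deriv g a * P1 v + deriv g b * P2 v + deriv g c * P3 v) +
        Λ₀ * (deriv f a * P1 v + deriv f b * P2 v + deriv f c * P3 v) = 0 := by
    intro v
    have := DFunLike.congr_fun hΛ v
    simp only [Fintype.sum_bool, hΦ'def, hφ'def, cond, ContinuousLinearMap.add_apply,
      ContinuousLinearMap.smul_apply, ContinuousLinearMap.zero_apply, smul_eq_mul] at this
    ring_nf at this ⊢
    linarith
  have eqa : Λ true + Λ false * deriv g a + Λ₀ * deriv f a = 0 := by
    have := heval (1, 0, 0)
    simp [hP1def, hP2def, hP3def] at this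
    linarith
  have eqb : Λ true + Λ false * deriv g b + Λ₀ * deriv f b = 0 := by
    have := heval (0, 1, 0)
    simp [hP1def, hP2def, hP3def] at this
    linarith
  have eqc : Λ true + Λ false * deriv g c + Λ₀ * deriv f c = 0 := by
    have := heval (0, 0, 1)
    simp [hP1def, hP2def, hP3def] at this
    linarith
  have hΛ₀ : Λ₀ ≠ 0 := by
    intro h0
    rw [h0] at eqa eqb
    have hgab : deriv g a ≠ deriv g b := fun h => hab (hg' haI hbI h)
    have hΛf : Λ false = 0 := by
      have : Λ false * (deriv g a - deriv g b) = 0 := by ring_nf; linarith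
      rcases mul_eq_zero.1 this with h | h
      · exact h
      · exact absurd (by linarith : deriv g a = deriv g b) hgab
    have hΛt : Λ true = 0 := by rw [hΛf] at eqa; linarith
    apply hΛne
    have : Λ = 0 := by
      funext i; cases i
      · exact hΛf
      · exact hΛt
    simp [this, h0, Prod.ext_iff]
  set lam : ℝ := -(Λ false) / Λ₀ with hlamdef
  set F : ℝ → ℝ := fun x => deriv f x - lam * deriv g x with hFdef
  have hFval : ∀ x, Λ true + Λ false * deriv g x + Λ₀ * deriv f x = 0 →
      F x = -(Λ true) / Λ₀ := by
    intro x hx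
    rw [hFdef]
    field_simp [hlamdef]
    rw [hlamdef]; field_simp; linarith
  have hFa := hFval a eqa
  have hFb := hFval b eqb
  have hFc := hFval c eqc
  have hdf : ContDiffOn ℝ 1 (deriv f) (Ioo 0 M) := hfO.deriv_of_isOpen hopen (by norm_num)
  have hdg : ContDiffOn ℝ 1 (deriv g) (Ioo 0 M) := hgO.deriv_of_isOpen hopen (by norm_num)
  have key : ∀ x y : ℝ, x ∈ Ioo 0 M → y ∈ Ioo 0 M → x < y → F x = F y →
      ∃ z ∈ Ioo x y, iteratedDeriv 2 f z / iteratedDeriv 2 g z = lam := by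
    intro x y hx hy hxy hFeq
    have hsub : Icc x y ⊆ Ioo 0 M := Icc_subset_Ioo hx.1 hy.2
    have hcont : ContinuousOn F (Icc x y) :=
      (hdf.continuousOn.mono hsub).sub
        (continuousOn_const.mul (hdg.continuousOn.mono hsub))
    obtain ⟨z, hz, hz0⟩ := exists_deriv_eq_zero hxy hcont hFeq
    have hzO : z ∈ Ioo 0 M := hsub (Ioo_subset_Icc_self hz)
    have hzI : z ∈ Icc 0 M := Ioo_subset_Icc_self hzO
    have hdfz : DifferentiableAt ℝ (deriv f) z :=
      ((hdf.differentiableOn one_ne_zero) z hzO).differentiableAt (hopen.mem_nhds hzO)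
    have hdgz : DifferentiableAt ℝ (deriv g) z :=
      ((hdg.differentiableOn one_ne_zero) z hzO).differentiableAt (hopen.mem_nhds hzO)
    have hFz : deriv F z = iteratedDeriv 2 f z - lam * iteratedDeriv 2 g z := by
      rw [hFdef]
      rw [deriv_fun_sub hdfz (hdgz.const_mul lam), deriv_const_mul lam hdgz]
      simp [iteratedDeriv_succ, iteratedDeriv_one]
    have h2 : iteratedDeriv 2 f z = lam * iteratedDeriv 2 g z := by
      rw [hFz] at hz0; linarith
    refine ⟨z, hz, ?_⟩
    rw [h2]
    field_simp [hg'' z hzI]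
  obtain ⟨x, y, z, hx, hy, hz, hxy, hyz, hFxy, hFyz⟩ :
      ∃ x y z : ℝ, x ∈ Ioo 0 M ∧ y ∈ Ioo 0 M ∧ z ∈ Ioo 0 M ∧ x < y ∧ y < z ∧
        F x = F y ∧ F y = F z := by
    rcases lt_trichotomy a b with h1 | h1 | h1
    · rcases lt_trichotomy b c with h2 | h2 | h2
      · exact ⟨a, b, c, ha, hb, hc, h1, h2, hFa.trans hFb.symm, hFb.trans hFc.symm⟩
      · exact absurd h2 hbc
      · rcases lt_trichotomy a c with h3 | h3 | h3
        · exact ⟨a, c, b, ha, hc, hb, h3, h2, hFa.trans hFc.symm, hFc.trans hFb.symm⟩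
        · exact absurd h3 hac
        · exact ⟨c, a, b, hc, ha, hb, h3, h1, hFc.trans hFa.symm, hFa.trans hFb.symm⟩
    · exact absurd h1 hab
    · rcases lt_trichotomy a c with h2 | h2 | h2
      · exact ⟨b, a, c, hb, ha, hc, h1, h2, hFb.trans hFa.symm, hFa.trans hFc.symm⟩
      · exact absurd h2 hac
      · rcases lt_trichotomy b c with h3 | h3 | h3
        · exact ⟨b, c, a, hb, hc, ha, h3, h2, hFb.trans hFc.symm, hFc.trans hFa.symm⟩
        · exact absurd h3 hbc
        · exact ⟨c, b, a, hc, hb, ha, h3, h1, hFc.trans hFb.symm, hFb.trans hFa.symm⟩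
  obtain ⟨z₁, hz₁, hq₁⟩ := key x y hx hy hxy hFxy
  obtain ⟨z₂, hz₂, hq₂⟩ := key y z hy hz hyz hFyz
  have hz₁I : z₁ ∈ Icc 0 M := Ioo_subset_Icc_self (Icc_subset_Ioo hx.1 hy.2 (Ioo_subset_Icc_self hz₁))
  have hz₂I : z₂ ∈ Icc 0 M := Ioo_subset_Icc_self (Icc_subset_Ioo hy.1 hz.2 (Ioo_subset_Icc_self hz₂))
  have h12 : z₁ = z₂ := hfg hz₁I hz₂I (by simpa using hq₁.trans hq₂.symm)
  exact absurd h12 (ne_of_lt (hz₁.2.trans hz₂.1))
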